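/- Fix a prime p and b(x) ∈ 𝔽_p(x), and let Δ: 𝔽_p(x) → 𝔽_p(x) be given by Δ(f) = f' + b(x)·f. The equation y' + b(x)·y = 0 has a nonzero solution in 𝔽_p(x) if and only if Δ^p = 0. -/

import Mathlib

open Polynomial

/-- Formal derivative of a rational function, via the quotient rule on the
canonical numerator/denominator representation. -/
noncomputable def rderiv {F : Type*} [Field F] (f : RatFunc F) : RatFunc F :=
  algebraMap (Polynomial F) (RatFunc F)
      (Polynomial.derivative f.num * f.denom - f.num * Polynomial.derivative f.denom) /
    algebraMap (Polynomial F) (RatFunc F) (f.denom ^ 2)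

variable {F : Type*} [Field F]

lemma rderiv_div (u v : Polynomial F) (hv : v ≠ 0) :
    rderiv (algebraMap (Polynomial F) (RatFunc F) u / algebraMap (Polynomial F) (RatFunc F) v) =
      algebraMap (Polynomial F) (RatFunc F) (derivative u * v - u * derivative v) /
        algebraMap (Polynomial F) (RatFunc F) (v ^ 2) := by
  set f := algebraMap (Polynomial F) (RatFunc F) u / algebraMap (Polynomial F) (RatFunc F) v with hf
  have hd : f.denom ≠ 0 := f.denom_ne_zero
  have hkey : f.num * v = u * f.denom := by
    have h1 : algebraMap (Polynomial F) (RatFunc F) f.num / algebraMap _ _ f.denom = f :=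
      f.num_div_denom
    rw [hf, div_eq_div_iff (RatFunc.algebraMap_ne_zero hd) (RatFunc.algebraMap_ne_zero hv)] at h1
    exact RatFunc.algebraMap_injective F (by rw [map_mul, map_mul]; exact h1)
  have hkey' : derivative f.num * v + f.num * derivative v
      = derivative u * f.denom + u * derivative f.denom := by
    have := congrArg derivative hkey
    rwa [derivative_mul, derivative_mul] at this
  rw [rderiv, div_eq_div_iff (RatFunc.algebraMap_ne_zero (pow_ne_zero 2 hd))
    (RatFunc.algebraMap_ne_zero (pow_ne_zero 2 hv)), ← map_mul, ← map_mul]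
  apply congrArg
  linear_combination (f.denom * v) * hkey' -
    (derivative f.denom * v + derivative v * f.denom) * hkey

lemma rderiv_eq (f : RatFunc F) :
    rderiv f = algebraMap (Polynomial F) (RatFunc F)
        (derivative f.num * f.denom - f.num * derivative f.denom) /
      algebraMap (Polynomial F) (RatFunc F) (f.denom ^ 2) := rfl

lemma rderiv_algebraMap (u : Polynomial F) :
    rderiv (algebraMap (Polynomial F) (RatFunc F) u)
      = algebraMap (Polynomial F) (RatFunc F) (derivative u) := by
  have := rderiv_div u 1 one_ne_zero
  simpa using this

lemma rderiv_mul (f g : RatFunc F) :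
    rderiv (f * g) = rderiv f * g + f * rderiv g := by
  obtain ⟨u1, v1, hv1, rfl⟩ : ∃ u v, v ≠ 0 ∧
      f = algebraMap (Polynomial F) (RatFunc F) u / algebraMap (Polynomial F) (RatFunc F) v :=
    ⟨f.num, f.denom, f.denom_ne_zero, f.num_div_denom.symm⟩
  obtain ⟨u2, v2, hv2, rfl⟩ : ∃ u v, v ≠ 0 ∧
      g = algebraMap (Polynomial F) (RatFunc F) u / algebraMap (Polynomial F) (RatFunc F) v :=
    ⟨g.num, g.denom, g.denom_ne_zero, g.num_div_denom.symm⟩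
  rw [div_mul_div_comm, ← map_mul, ← map_mul, rderiv_div _ _ (mul_ne_zero hv1 hv2),
    rderiv_div u1 v1 hv1, rderiv_div u2 v2 hv2]
  have h1 : algebraMap (Polynomial F) (RatFunc F) v1 ≠ 0 := RatFunc.algebraMap_ne_zero hv1
  have h2 : algebraMap (Polynomial F) (RatFunc F) v2 ≠ 0 := RatFunc.algebraMap_ne_zero hv2
  field_simp
  simp only [map_mul, map_pow, map_sub, map_add, map_neg, derivative_mul]
  ring

lemma rderiv_one : rderiv (1 : RatFunc F) = 0 := by
  simpa using rderiv_algebraMap (1 : Polynomial F)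

lemma rderiv_inv_eq_zero {c : RatFunc F} (hc : c ≠ 0) (h : rderiv c = 0) :
    rderiv c⁻¹ = 0 := by
  have h1 := rderiv_mul c c⁻¹
  rw [mul_inv_cancel₀ hc, rderiv_one, h] at h1
  simp only [zero_mul, zero_add] at h1
  exact ((mul_eq_zero.mp h1.symm).resolve_left hc)

lemma iterate_derivative_char_p (p : ℕ) [Fact p.Prime] (A : Polynomial (ZMod p)) :
    derivative^[p] A = 0 := by
  ext m
  rw [Polynomial.coeff_iterate_derivative, Polynomial.coeff_zero]
  obtain ⟨k, hk⟩ : p ∣ (m + p).descFactorial p :=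
    dvd_trans (Nat.dvd_factorial (Fact.out : p.Prime).pos le_rfl)
      (Nat.factorial_dvd_descFactorial _ _)
  rw [hk, mul_nsmul]
  simp [nsmul_eq_mul]

lemma rderiv_iterate_p_eq_zero (p : ℕ) [Fact p.Prime] (g : RatFunc (ZMod p)) :
    rderiv^[p] g = 0 := by
  have hppos : 0 < p := (Fact.out : p.Prime).pos
  set c : RatFunc (ZMod p) := algebraMap (Polynomial (ZMod p)) _ (g.denom ^ p) with hc
  have hB : derivative (g.denom ^ p) = 0 := by
    rw [Polynomial.derivative_pow]
    simp
  have hcne : c ≠ 0 := RatFunc.algebraMap_ne_zero (pow_ne_zero p g.denom_ne_zero)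
  have hcd : rderiv c = 0 := by rw [hc, rderiv_algebraMap, hB, map_zero]
  have hinv : rderiv c⁻¹ = 0 := rderiv_inv_eq_zero hcne hcd
  set A : Polynomial (ZMod p) := g.num * g.denom ^ (p - 1) with hA
  have hg : g = algebraMap (Polynomial (ZMod p)) _ A * c⁻¹ := by
    rw [eq_comm, mul_inv_eq_iff_eq_mul₀ hcne, ← g.num_div_denom, hA, hc, map_mul, map_pow,
      map_pow, div_mul_eq_mul_div, mul_comm]
    rw [eq_div_iff (RatFunc.algebraMap_ne_zero g.denom_ne_zero),
      mul_comm _ (algebraMap (Polynomial (ZMod p)) (RatFunc (ZMod p)) g.num), mul_assoc,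
      ← pow_succ, Nat.sub_add_cancel hppos]
  have claim : ∀ k, rderiv^[k] g =
      algebraMap (Polynomial (ZMod p)) _ (derivative^[k] A) * c⁻¹ := by
    intro k
    induction k with
    | zero => simpa using hg
    | succ k ih =>
      rw [Function.iterate_succ_apply', ih, Function.iterate_succ_apply', rderiv_mul,
        rderiv_algebraMap, hinv, mul_zero, add_zero]
  rw [claim p, iterate_derivative_char_p, map_zero, zero_mul]

/-- **Cartier's lemma in order 1**: for a prime `p` and `b(x) ∈ 𝔽_p(x)`, with
`Δ : f ↦ f' + b·f`, the equation `y' + b(x)y = 0` has a nonzero solution in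
`𝔽_p(x)` if and only if the `p`-curvature `Δ^p` is identically zero. -/
theorem order_one_rational_solution_iff_pCurvature_zero
    (p : ℕ) [Fact p.Prime] (b : RatFunc (ZMod p)) :
    (∃ f : RatFunc (ZMod p), f ≠ 0 ∧ rderiv f + b * f = 0) ↔
      ∀ f : RatFunc (ZMod p),
        (fun g : RatFunc (ZMod p) => rderiv g + b * g)^[p] f = 0 := by
  set Δ : RatFunc (ZMod p) → RatFunc (ZMod p) := fun g => rderiv g + b * g with hΔ
  constructor
  · rintro ⟨f, hf0, hfeq⟩ g
    have claim : ∀ (k : ℕ) (h : RatFunc (ZMod p)), Δ^[k] (h * f) = rderiv^[k] h * f := by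
      intro k
      induction k with
      | zero => intro h; rfl
      | succ k ih =>
        intro h
        rw [Function.iterate_succ_apply', ih, Function.iterate_succ_apply']
        show rderiv (rderiv^[k] h * f) + b * (rderiv^[k] h * f) = rderiv (rderiv^[k] h) * f
        rw [rderiv_mul]
        linear_combination (rderiv^[k] h) * hfeq
    have := claim p (g / f)
    rwa [div_mul_cancel₀ g hf0, rderiv_iterate_p_eq_zero, zero_mul] at this
  · intro H
    classical
    have hex : ∃ k, Δ^[k] (1 : RatFunc (ZMod p)) = 0 := ⟨p, H 1⟩
    have hk : Δ^[Nat.find hex] (1 : RatFunc (ZMod p)) = 0 := Nat.find_spec hex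
    have hkpos : Nat.find hex ≠ 0 := by
      intro h
      rw [h] at hk
      exact one_ne_zero hk
    refine ⟨Δ^[Nat.find hex - 1] 1, Nat.find_min hex (Nat.pred_lt hkpos), ?_⟩
    have h2 : Δ^[Nat.find hex - 1 + 1] 1 = 0 := by
      rwa [Nat.sub_add_cancel (Nat.one_le_iff_ne_zero.mpr hkpos)]
    rw [Function.iterate_succ_apply'] at h2
    exact h2
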